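/- For Beltrami coefficients \(\mu_1, \mu_2, \nu\) on the unit disk (measurable functions with \(L^\infty\) norm less than 1), if \(f^\nu\) is the normalized quasiconformal self-map of the disk with complex dilatation \(\nu\), then the complex dilatations of the compositions satisfy \(|\mu_1 * \nu^{-1}(\zeta) - \mu_2 * \nu^{-1}(\zeta)| \le |\mu_1(z) - \mu_2(z)| / \sqrt{(1-|\mu_1(z)|^2)(1-|\mu_2(z)|^2)}\) for \(\zeta = f^\nu(z)\), \(z \in \mathbb{D}\). -/

import Mathlib

open Complex Metric


lemma den_ne (c a : ℂ) (hc : ‖c‖ < 1) (ha : ‖a‖ < 1) :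
    (1 - (starRingEnd ℂ) c * a) ≠ 0 := by
  intro h
  have h1 : (1 : ℂ) = (starRingEnd ℂ) c * a := by linear_combination h
  have h2 : (1:ℝ) = ‖c‖ * ‖a‖ := by
    have := congrArg norm h1
    simpa [norm_mul] using this
  nlinarith [norm_nonneg c, norm_nonneg a]

lemma lb (c a : ℂ) : (1 - ‖a‖^2) * (1 - ‖c‖^2) ≤ ‖1 - (starRingEnd ℂ) c * a‖^2 := by
  have h : ‖1 - (starRingEnd ℂ) c * a‖^2 - (1 - ‖a‖^2) * (1 - ‖c‖^2) = ‖a - c‖^2 := by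
    simp only [Complex.sq_norm,
      Complex.normSq_apply, Complex.sub_re, Complex.sub_im, Complex.mul_re, Complex.mul_im,
      Complex.one_re, Complex.one_im, Complex.conj_re, Complex.conj_im]
    ring
  nlinarith [sq_nonneg ‖a - c‖]

lemma key (a b c : ℂ) (ha : ‖a‖ < 1) (hb : ‖b‖ < 1) (hc : ‖c‖ < 1) :
    ‖(a - c) / (1 - (starRingEnd ℂ) c * a) - (b - c) / (1 - (starRingEnd ℂ) c * b)‖
      ≤ ‖a - b‖ / Real.sqrt ((1 - ‖a‖^2) * (1 - ‖b‖^2)) := by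
  have hA := den_ne c a hc ha
  have hB := den_ne c b hc hb
  have hc2 : (0:ℝ) < 1 - ‖c‖^2 := by nlinarith [norm_nonneg c]
  have ha2 : (0:ℝ) < 1 - ‖a‖^2 := by nlinarith [norm_nonneg a]
  have hb2 : (0:ℝ) < 1 - ‖b‖^2 := by nlinarith [norm_nonneg b]
  have hid : (a - c) / (1 - (starRingEnd ℂ) c * a) - (b - c) / (1 - (starRingEnd ℂ) c * b)
      = (a - b) * (1 - (Complex.normSq c : ℂ)) /
        ((1 - (starRingEnd ℂ) c * a) * (1 - (starRingEnd ℂ) c * b)) := by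
    rw [div_sub_div _ _ hA hB]
    congr 1
    rw [Complex.normSq_eq_conj_mul_self]
    ring
  rw [hid]
  have hns : Complex.normSq c = ‖c‖^2 := by
    rw [Complex.normSq_eq_norm_sq]
  have hnc : ‖(1 - (Complex.normSq c : ℂ))‖ = 1 - ‖c‖^2 := by
    rw [← Complex.ofReal_one, ← Complex.ofReal_sub, Complex.norm_real, Real.norm_eq_abs,
      abs_of_pos (by rw [hns]; exact hc2), hns]
  rw [norm_div, norm_mul, norm_mul, hnc]
  have hDa : Real.sqrt ((1 - ‖a‖^2) * (1 - ‖c‖^2)) ≤ ‖1 - (starRingEnd ℂ) c * a‖ := by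
    have := Real.sqrt_le_sqrt (lb c a)
    rwa [Real.sqrt_sq (norm_nonneg _)] at this
  have hDb : Real.sqrt ((1 - ‖b‖^2) * (1 - ‖c‖^2)) ≤ ‖1 - (starRingEnd ℂ) c * b‖ := by
    have := Real.sqrt_le_sqrt (lb c b)
    rwa [Real.sqrt_sq (norm_nonneg _)] at this
  have hprod : Real.sqrt ((1 - ‖a‖^2) * (1 - ‖b‖^2)) * (1 - ‖c‖^2)
      ≤ ‖1 - (starRingEnd ℂ) c * a‖ * ‖1 - (starRingEnd ℂ) c * b‖ := by
    have hm := mul_le_mul hDa hDb (Real.sqrt_nonneg _) (norm_nonneg _)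
    have heq : Real.sqrt ((1 - ‖a‖^2) * (1 - ‖c‖^2)) * Real.sqrt ((1 - ‖b‖^2) * (1 - ‖c‖^2))
        = Real.sqrt ((1 - ‖a‖^2) * (1 - ‖b‖^2)) * (1 - ‖c‖^2) := by
      rw [← Real.sqrt_mul (by positivity),
        show (1-‖a‖^2)*(1-‖c‖^2)*((1-‖b‖^2)*(1-‖c‖^2))
          = ((1-‖a‖^2)*(1-‖b‖^2))*(1-‖c‖^2)^2 by ring,
        Real.sqrt_mul (by positivity), Real.sqrt_sq hc2.le]
    rw [heq] at hm
    exact hm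
  have hS : (0:ℝ) < Real.sqrt ((1 - ‖a‖^2) * (1 - ‖b‖^2)) := Real.sqrt_pos.mpr (by positivity)
  have hD : (0:ℝ) < ‖1 - (starRingEnd ℂ) c * a‖ * ‖1 - (starRingEnd ℂ) c * b‖ :=
    mul_pos (norm_pos_iff.mpr hA) (norm_pos_iff.mpr hB)
  rw [div_le_div_iff₀ hD hS]
  calc ‖a - b‖ * (1 - ‖c‖^2) * Real.sqrt ((1 - ‖a‖^2) * (1 - ‖b‖^2))
      = ‖a - b‖ * (Real.sqrt ((1 - ‖a‖^2) * (1 - ‖b‖^2)) * (1 - ‖c‖^2)) := by ring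
    _ ≤ ‖a - b‖ * (‖1 - (starRingEnd ℂ) c * a‖ * ‖1 - (starRingEnd ℂ) c * b‖) :=
        mul_le_mul_of_nonneg_left hprod (norm_nonneg _)

/-- Proposition `base2` of the paper: let `μ₁, μ₂, ν` be Beltrami coefficients on the unit
disk (pointwise modulus `< 1`), let `f` be the normalized quasiconformal self-map `f^ν`
of the disk (a bijection of the disk fixing the three boundary points `1, i, -1` of its
boundary extension), and let `u = ∂f/ conj(∂f)` be the unimodular derivative ratio.
If `d₁, d₂` are the complex dilatations of `f^{μ₁} ∘ (f^ν)⁻¹` and `f^{μ₂} ∘ (f^ν)⁻¹`,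
given at `ζ = f(z)` by the composition formula
`dᵢ(f z) = ((μᵢ z - ν z)/(1 - conj(ν z) μᵢ z)) ⬝ u z`, then
`|d₁(ζ) - d₂(ζ)| ≤ |μ₁(z) - μ₂(z)| / √((1-|μ₁ z|²)(1-|μ₂ z|²))` for `ζ = f(z)`, `z ∈ 𝔻`. -/
theorem stmt_0 (μ₁ μ₂ ν : ℂ → ℂ)
    (hμ₁ : ∀ z ∈ ball (0 : ℂ) 1, ‖μ₁ z‖ < 1)
    (hμ₂ : ∀ z ∈ ball (0 : ℂ) 1, ‖μ₂ z‖ < 1)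
    (hν : ∀ z ∈ ball (0 : ℂ) 1, ‖ν z‖ < 1)
    (f : ℂ → ℂ) (hf : Set.BijOn f (ball (0 : ℂ) 1) (ball (0 : ℂ) 1))
    (u : ℂ → ℂ) (hu : ∀ z ∈ ball (0 : ℂ) 1, ‖u z‖ = 1)
    (d₁ d₂ : ℂ → ℂ)
    (hd₁ : ∀ z ∈ ball (0 : ℂ) 1,
      d₁ (f z) = (μ₁ z - ν z) / (1 - (starRingEnd ℂ) (ν z) * μ₁ z) * u z)
    (hd₂ : ∀ z ∈ ball (0 : ℂ) 1,
      d₂ (f z) = (μ₂ z - ν z) / (1 - (starRingEnd ℂ) (ν z) * μ₂ z) * u z) :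
    ∀ z ∈ ball (0 : ℂ) 1,
      ‖d₁ (f z) - d₂ (f z)‖
        ≤ ‖μ₁ z - μ₂ z‖ / Real.sqrt ((1 - ‖μ₁ z‖ ^ 2) * (1 - ‖μ₂ z‖ ^ 2)) := by
  intro z hz
  rw [hd₁ z hz, hd₂ z hz, ← sub_mul, norm_mul, hu z hz, mul_one]
  exact key (μ₁ z) (μ₂ z) (ν z) (hμ₁ z hz) (hμ₂ z hz) (hν z hz)
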